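/- Let φ ∈ 𝔽 and define, for k ≥ 0, H_k(u) = H_φ^{-1}(H_φ(u) + k) − H_φ^{-1}(k) for u ≥ 1. Then each H_k is concave on [1,∞), and H_0(u) ≤ u for all u ≥ 1. -/

import Mathlib

open Set Filter MeasureTheory intervalIntegral Topology

/-- for `φ ∈ 𝔽` with `H_φ(u) = ∫_1^u ds/φ(s)` and inverse `G`,
each `H_k(u) = G(H_φ(u) + k) − G(k)` is concave on `[1,∞)`, and
`H_0(u) ≤ u` for all `u ≥ 1`. -/
theorem Hk_concave_and_H0_le
    (φ φd : ℝ → ℝ)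
    (hconc : ConcaveOn ℝ (Set.Ici (1 : ℝ)) φ)
    (hmono : StrictMonoOn φ (Set.Ici (1 : ℝ)))
    (hpos : ∀ u ≥ (1 : ℝ), 0 < φ u)
    (hderiv : ∀ u ∈ Set.Ici (1 : ℝ), HasDerivWithinAt φ (φd u) (Set.Ici 1) u)
    (hcont : ContinuousOn φd (Set.Ici (1 : ℝ)))
    (H : ℝ → ℝ) (hH : ∀ u, H u = ∫ s in (1 : ℝ)..u, 1 / φ s)
    (G : ℝ → ℝ)
    (hG1 : ∀ u ≥ (1 : ℝ), G (H u) = u)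
    (hG2 : ∀ t ≥ (0 : ℝ), H (G t) = t ∧ 1 ≤ G t) :
    ∀ k : ℕ,
      ConcaveOn ℝ (Set.Ici (1 : ℝ)) (fun u => G (H u + k) - G k) ∧
      ∀ u ≥ (1 : ℝ), G (H u + (0 : ℕ)) - G (0 : ℕ) ≤ u := by
  have hφc : ContinuousOn φ (Set.Ici 1) := fun u hu => (hderiv u hu).continuousWithinAt
  have hne : ∀ u ≥ (1:ℝ), φ u ≠ 0 := fun u hu => (hpos u hu).ne'
  have hinvc : ContinuousOn (fun s => 1 / φ s) (Set.Ici 1) :=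
    continuousOn_const.div hφc (fun u hu => hne u hu)
  have hInt : ∀ a ∈ Set.Ici (1:ℝ), ∀ b ∈ Set.Ici (1:ℝ),
      IntervalIntegrable (fun s => 1 / φ s) volume a b := by
    intro a ha b hb
    exact (hinvc.mono (Set.ordConnected_Ici.uIcc_subset ha hb)).intervalIntegrable
  have heq : H = fun u => ∫ s in (1:ℝ)..u, 1 / φ s := funext hH
  have H1 : H 1 = 0 := by rw [hH]; simp
  have hHd : ∀ u > (1:ℝ), HasDerivAt H (1 / φ u) u := by
    intro u hu
    have hca : ContinuousAt (fun s => 1 / φ s) u :=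
      (hinvc u (le_of_lt hu)).continuousAt (Ici_mem_nhds hu)
    have h := intervalIntegral.integral_hasDerivAt_right (hInt 1 Set.self_mem_Ici u hu.le)
      ((hinvc.mono Set.Ioi_subset_Ici_self).stronglyMeasurableAtFilter isOpen_Ioi u hu)
      hca
    rw [heq]; exact h
  have hHc : ContinuousOn H (Set.Ici 1) := by
    intro u hu
    have h2 : ContinuousOn (fun x => ∫ s in (1:ℝ)..x, 1/φ s) (Set.uIcc 1 (u+1)) :=
      continuousOn_primitive_interval' (hInt 1 Set.self_mem_Ici (u+1) (by simp only [mem_Ici] at hu ⊢; linarith))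
        left_mem_uIcc
    have huIcc : Set.uIcc (1:ℝ) (u+1) = Set.Icc 1 (u+1) := by
      rw [Set.uIcc_of_le]; simp only [mem_Ici] at hu; linarith
    have h3 : ContinuousWithinAt H (Set.uIcc 1 (u+1)) u := by
      rw [heq]
      exact h2 u (by rw [huIcc]; simp only [mem_Ici] at hu; exact ⟨hu, by linarith⟩)
    rw [huIcc] at h3
    apply h3.mono_of_mem_nhdsWithin
    have : Set.Icc 1 (u+1) = Set.Ici 1 ∩ Set.Iic (u+1) := (Set.Ici_inter_Iic).symm
    rw [this]
    exact Filter.inter_mem self_mem_nhdsWithin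
      (mem_nhdsWithin_of_mem_nhds (Iic_mem_nhds (by simp only [mem_Ici] at hu; linarith)))
  have hdiffInt : ∀ x ∈ Set.Ici (1:ℝ), ∀ y ∈ Set.Ici (1:ℝ),
      H y - H x = ∫ s in x..y, 1/φ s := by
    intro x hx y hy
    have := intervalIntegral.integral_add_adjacent_intervals (hInt 1 Set.self_mem_Ici x hx) (hInt x hx y hy)
    rw [hH x, hH y]
    linarith
  have hHmono : StrictMonoOn H (Set.Ici 1) := by
    intro x hx y hy hxy
    have hp : 0 < ∫ s in x..y, 1/φ s := by
      apply intervalIntegral.intervalIntegral_pos_of_pos_on (hInt x hx y hy) _ hxy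
      intro s hs
      exact one_div_pos.mpr (hpos s (le_trans hx hs.1.le))
    have := hdiffInt x hx y hy
    linarith
  have hH0 : ∀ u ≥ (1:ℝ), 0 ≤ H u := by
    intro u hu
    rcases eq_or_lt_of_le hu with h | h
    · rw [← h, H1]
    · have := hHmono (self_mem_Ici) hu h
      linarith [H1]
  have hG0 : G 0 = 1 := by
    have := hG1 1 le_rfl
    rwa [H1] at this
  have hGmonoOn : MonotoneOn G (Set.Ici 0) := by
    intro s hs t ht hst
    by_contra h
    push_neg at h
    have h1 := hHmono (mem_Ici.mpr (hG2 t ht).2) (mem_Ici.mpr (hG2 s hs).2) h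
    rw [(hG2 t ht).1, (hG2 s hs).1] at h1
    linarith
  have hGgt : ∀ t > (0:ℝ), 1 < G t := by
    intro t ht
    rcases lt_or_ge 1 (G t) with h | h
    · exact h
    · exfalso
      have h1 : G t = 1 := le_antisymm h (hG2 t ht.le).2
      have := (hG2 t ht.le).1
      rw [h1, H1] at this
      linarith
  have hGcont : ∀ t > (0:ℝ), ContinuousAt G t := by
    intro t ht
    apply continuousAt_of_monotoneOn_of_image_mem_nhds hGmonoOn (Ici_mem_nhds ht)
    refine Filter.mem_of_superset (Ici_mem_nhds (hGgt t ht)) ?_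
    intro u hu
    exact ⟨H u, hH0 u hu, hG1 u hu⟩
  have hGd : ∀ t > (0:ℝ), HasDerivAt G (φ (G t)) t := by
    intro t ht
    have h1 : 1 < G t := hGgt t ht
    have hd : HasDerivAt H (1 / φ (G t)) (G t) := hHd _ h1
    have hfg : ∀ᶠ y in 𝓝 t, H (G y) = y := by
      filter_upwards [Ioi_mem_nhds ht] with y hy
      exact (hG2 y (le_of_lt hy)).1
    have := HasDerivAt.of_local_left_inverse (hGcont t ht) hd (one_div_ne_zero (hne _ h1.le)) hfg
    simpa using this
  have hφdanti : AntitoneOn φd (Set.Ici 1) := by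
    intro x hx y hy hxy
    rcases eq_or_lt_of_le hxy with rfl | h
    · exact le_refl _
    · have h1 := ConvexOn.le_slope_of_hasDerivWithinAt hconc.neg hx hy h ((hderiv x hx).neg)
      have h2 := ConvexOn.slope_le_of_hasDerivWithinAt hconc.neg hx hy h ((hderiv y hy).neg)
      linarith
  -- main concavity lemma for positive shift
  have key : ∀ c : ℝ, 0 < c → ConcaveOn ℝ (Set.Ici 1) (fun u => G (H u + c) - G c) := by
    intro c hc
    have hvpos : ∀ u ≥ (1:ℝ), 0 < H u + c := fun u hu => by linarith [hH0 u hu]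
    have hvge : ∀ u ≥ (1:ℝ), u ≤ G (H u + c) := by
      intro u hu
      have h := hGmonoOn (mem_Ici.mpr (hH0 u hu)) (mem_Ici.mpr (hvpos u hu).le)
        (by linarith : H u ≤ H u + c)
      rwa [hG1 u hu] at h
    have hvd : ∀ u > (1:ℝ), HasDerivAt (fun x => G (H x + c)) (φ (G (H u + c)) / φ u) u := by
      intro u hu
      have h1 : HasDerivAt (fun x => H x + c) (1 / φ u) u := (hHd u hu).add_const c
      have h2 : HasDerivAt G (φ (G (H u + c))) (H u + c) := hGd _ (hvpos u hu.le)
      have h3 := h2.comp u h1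
      rw [div_eq_mul_one_div]
      exact h3
    have hfc : ContinuousOn (fun u => G (H u + c) - G c) (Set.Ici 1) := by
      intro u hu
      have h1 : ContinuousWithinAt (fun x => H x + c) (Set.Ici 1) u :=
        (hHc u hu).add continuousWithinAt_const
      have h2 := ContinuousAt.comp_continuousWithinAt (f := fun x => H x + c) (x := u) (hGcont _ (hvpos u hu)) h1
      exact h2.sub continuousWithinAt_const
    have hdiffOn : DifferentiableOn ℝ (fun u => G (H u + c) - G c) (Set.Ioi 1) := by
      intro u hu
      exact (((hvd u hu).sub_const (G c)).differentiableAt).differentiableWithinAt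
    have hgderiv : ∀ u ∈ Set.Ioi (1:ℝ), HasDerivAt (fun x => φ (G (H x + c)) / φ x)
        ((φd (G (H u + c)) * (φ (G (H u + c)) / φ u) * φ u - φ (G (H u + c)) * φd u) / φ u ^ 2)
        u := by
      intro u hu
      have hu1 : (1:ℝ) < u := hu
      have hv1 : 1 < G (H u + c) := lt_of_lt_of_le hu1 (hvge u hu1.le)
      have hφv : HasDerivAt φ (φd (G (H u + c))) (G (H u + c)) :=
        (hderiv _ hv1.le).hasDerivAt (Ici_mem_nhds hv1)
      have hnum : HasDerivAt (fun x => φ (G (H x + c)))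
          (φd (G (H u + c)) * (φ (G (H u + c)) / φ u)) u := hφv.comp u (hvd u hu1)
      have hden : HasDerivAt φ (φd u) u := (hderiv u hu1.le).hasDerivAt (Ici_mem_nhds hu1)
      exact hnum.div hden (hne u hu1.le)
    have hganti : AntitoneOn (fun u => φ (G (H u + c)) / φ u) (Set.Ioi 1) := by
      apply antitoneOn_of_deriv_nonpos (convex_Ioi 1)
      · exact fun u hu => ((hgderiv u hu).continuousAt).continuousWithinAt
      · rw [interior_Ioi]
        exact fun u hu => ((hgderiv u hu).differentiableAt).differentiableWithinAt
      · rw [interior_Ioi]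
        intro u hu
        rw [(hgderiv u hu).deriv]
        have hu1 : (1:ℝ) < u := hu
        have hvu := hvge u hu1.le
        have hv1 : (1:ℝ) ≤ G (H u + c) := le_trans hu1.le hvu
        have h1 : φd (G (H u + c)) ≤ φd u := hφdanti (mem_Ici.mpr hu1.le) (mem_Ici.mpr hv1) hvu
        have hφu := hpos u hu1.le
        have hφv := hpos _ hv1
        apply div_nonpos_of_nonpos_of_nonneg _ (by positivity)
        have hrw : φd (G (H u + c)) * (φ (G (H u + c)) / φ u) * φ u
            = φd (G (H u + c)) * φ (G (H u + c)) := by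
          field_simp
        rw [hrw]
        nlinarith
    have hanti' : AntitoneOn (deriv (fun u => G (H u + c) - G c)) (Set.Ioi 1) := by
      intro x hx y hy hxy
      rw [((hvd x hx).sub_const (G c)).deriv, ((hvd y hy).sub_const (G c)).deriv]
      exact hganti hx hy hxy
    have hIci : interior (Set.Ici (1:ℝ)) = Set.Ioi 1 := interior_Ici
    exact AntitoneOn.concaveOn_of_deriv (convex_Ici 1) hfc (hIci ▸ hdiffOn) (hIci ▸ hanti')
  intro k
  constructor
  · rcases Nat.eq_zero_or_pos k with rfl | hk
    · refine ⟨convex_Ici 1, ?_⟩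
      intro x hx y hy a b ha hb hab
      have hval : ∀ u ∈ Set.Ici (1:ℝ), G (H u + ((0:ℕ):ℝ)) - G ((0:ℕ):ℝ) = u - 1 := by
        intro u hu
        simp only [Nat.cast_zero, add_zero]
        rw [hG1 u hu, hG0]
      have hmem : a • x + b • y ∈ Set.Ici (1:ℝ) := convex_Ici 1 hx hy ha hb hab
      simp only []
      rw [hval x hx, hval y hy, hval _ hmem]
      simp only [smul_eq_mul]
      nlinarith
    · exact key (k:ℝ) (by exact_mod_cast hk)
  · intro u hu
    have h1 : G (H u + ((0:ℕ):ℝ)) = u := by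
      simp only [Nat.cast_zero, add_zero]
      exact hG1 u hu
    have h2 : G ((0:ℕ):ℝ) = 1 := by simp only [Nat.cast_zero]; exact hG0
    rw [h1, h2]
    linarith
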